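/- Error estimate for the smooth component (two equations): Assume n = 2 and √ε₂ ≤ √α/6. Let v = (v₁,v₂) be any vector function on Ω̄ whose components have continuous partial derivatives ∂ₜ^m v_i (m ≤ 2), ∂ₓ^l v_i (l ≤ 4) and ∂ₓ^l ∂ₜ v_i (l ≤ 2) on Ω̄, satisfying Lv = f on Ω and, for some constant C₀: |∂ₜ^m v_i| ≤ C₀ (m = 0,1,2), |∂ₓ^l v_i| ≤ C₀ (l = 1,2), |∂ₓ^l v_i| ≤ C₀ ε_i^{−(l−2)/2} (l = 3,4), and |∂ₓ^l ∂ₜ v_i| ≤ C₀ (l = 1,2) on Ω̄. Let V be the mesh function on the Shishkin grid satisfying (L^{N,M}V)_i(x_j,t_k) = f_i(x_j,t_k) for 1 ≤ j ≤ N−1, 1 ≤ k ≤ M, (β₀^{N,M}V)_i(0,t_k) = (β₀v)_i(0,t_k), (β₁^{N,M}V)_i(1,t_k) = (β₁v)_i(1,t_k) for 1 ≤ k ≤ M, and V_i(x_j,0) = v_i(x_j,0). Then there exists a constant C, depending only on C₀, α, T and sup norms of A, and independent of ε₁, ε₂, N and M, such that for all N = 8q with integer q ≥ 3 and all M ≥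 1: max over i ∈ {1,2}, 0 ≤ j ≤ N, 0 ≤ k ≤ M of |V_i(x_j,t_k) − v_i(x_j,t_k)| ≤ C (M^{−1} + N^{−1} ln N). -/

import Mathlib

/-- The piecewise-uniform Shishkin mesh on `[0,1]` with `N = 8q` mesh
intervals and transition parameters
`σ₂ = min(1/4, 2√(ε₂/α) ln N)`, `σ₁ = min(σ₂/2, 2√(ε₁/α) ln N)`:
each of `[0,σ₁]`, `[σ₁,σ₂]`, `[1-σ₂,1-σ₁]`, `[1-σ₁,1]` carries `q = N/8`
equal mesh intervals and `[σ₂,1-σ₂]` carries `4q = N/2` equal mesh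
intervals. -/
noncomputable def shMesh (α ε1 ε2 : ℝ) (q j : ℕ) : ℝ :=
  let N : ℝ := 8 * (q : ℝ)
  let σ2 : ℝ := min (1 / 4) (2 * Real.sqrt (ε2 / α) * Real.log N)
  let σ1 : ℝ := min (σ2 / 2) (2 * Real.sqrt (ε1 / α) * Real.log N)
  if j ≤ q then σ1 * (j : ℝ) / (q : ℝ)
  else if j ≤ 2 * q then σ1 + (σ2 - σ1) * ((j : ℝ) - (q : ℝ)) / (q : ℝ)
  else if j ≤ 6 * q then σ2 + (1 - 2 * σ2) * ((j : ℝ) - 2 * (q : ℝ)) / (4 * (q : ℝ))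
  else if j ≤ 7 * q then (1 - σ2) + (σ2 - σ1) * ((j : ℝ) - 6 * (q : ℝ)) / (q : ℝ)
  else (1 - σ1) + σ1 * ((j : ℝ) - 7 * (q : ℝ)) / (q : ℝ)

noncomputable def pw (σ1 σ2 : ℝ) (q j : ℕ) : ℝ :=
  if j ≤ q then σ1 * (j : ℝ) / (q : ℝ)
  else if j ≤ 2 * q then σ1 + (σ2 - σ1) * ((j : ℝ) - (q : ℝ)) / (q : ℝ)
  else if j ≤ 6 * q then σ2 + (1 - 2 * σ2) * ((j : ℝ) - 2 * (q : ℝ)) / (4 * (q : ℝ))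
  else if j ≤ 7 * q then (1 - σ2) + (σ2 - σ1) * ((j : ℝ) - 6 * (q : ℝ)) / (q : ℝ)
  else (1 - σ1) + σ1 * ((j : ℝ) - 7 * (q : ℝ)) / (q : ℝ)

lemma shMesh_eq_pw (α ε1 ε2 : ℝ) (q j : ℕ) :
    shMesh α ε1 ε2 q j =
      pw (min ((min (1/4) (2 * Real.sqrt (ε2/α) * Real.log (8*(q:ℝ))))/2)
            (2 * Real.sqrt (ε1/α) * Real.log (8*(q:ℝ))))
         (min (1/4) (2 * Real.sqrt (ε2/α) * Real.log (8*(q:ℝ)))) q j := rfl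

lemma pw_zero (σ1 σ2 : ℝ) (q : ℕ) : pw σ1 σ2 q 0 = 0 := by
  simp [pw]

lemma pw_last (σ1 σ2 : ℝ) (q : ℕ) (hq : 1 ≤ q) : pw σ1 σ2 q (8*q) = 1 := by
  have hq0 : (q:ℝ) ≠ 0 := Nat.cast_ne_zero.2 (by omega)
  simp only [pw]
  rw [if_neg (by omega), if_neg (by omega), if_neg (by omega), if_neg (by omega)]
  push_cast
  field_simp
  ring

lemma pw_step (σ1 σ2 : ℝ) (q : ℕ) (hq : 1 ≤ q) (j : ℕ) (hj : j < 8*q) :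
    pw σ1 σ2 q (j+1) - pw σ1 σ2 q j =
      if j < q then σ1/q else if j < 2*q then (σ2-σ1)/q
      else if j < 6*q then (1-2*σ2)/(4*q) else if j < 7*q then (σ2-σ1)/q
      else σ1/q := by
  have hq0 : (q:ℝ) ≠ 0 := Nat.cast_ne_zero.2 (by omega)
  simp only [pw]
  rcases lt_or_ge j q with h1 | h1
  · rw [if_pos h1, if_pos (by omega : j+1 ≤ q), if_pos (by omega : j ≤ q)]
    push_cast; field_simp; ring
  · rw [if_neg (by omega : ¬ j < q)]
    rcases lt_or_ge j (2*q) with h2 | h2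
    · rw [if_pos h2, if_neg (by omega : ¬ j+1 ≤ q), if_pos (by omega : j+1 ≤ 2*q)]
      by_cases hjq : j ≤ q
      · have hjq' : j = q := by omega
        subst hjq'
        rw [if_pos le_rfl]
        push_cast; field_simp; ring
      · rw [if_neg hjq, if_pos (by omega)]
        push_cast; field_simp; ring
    · rw [if_neg (by omega : ¬ j < 2*q)]
      rcases lt_or_ge j (6*q) with h3 | h3
      · rw [if_pos h3, if_neg (by omega : ¬ j+1 ≤ q), if_neg (by omega : ¬ j+1 ≤ 2*q),
          if_pos (by omega : j+1 ≤ 6*q), if_neg (by omega : ¬ j ≤ q)]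
        by_cases hjq : j ≤ 2*q
        · have hjq' : j = 2*q := by omega
          subst hjq'
          rw [if_pos le_rfl]
          push_cast; field_simp; ring
        · rw [if_neg hjq, if_pos (by omega)]
          push_cast; field_simp; ring
      · rw [if_neg (by omega : ¬ j < 6*q)]
        rcases lt_or_ge j (7*q) with h4 | h4
        · rw [if_pos h4, if_neg (by omega : ¬ j+1 ≤ q), if_neg (by omega : ¬ j+1 ≤ 2*q),
            if_neg (by omega : ¬ j+1 ≤ 6*q), if_pos (by omega : j+1 ≤ 7*q),
            if_neg (by omega : ¬ j ≤ q), if_neg (by omega : ¬ j ≤ 2*q)]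
          by_cases hjq : j ≤ 6*q
          · have hjq' : j = 6*q := by omega
            subst hjq'
            rw [if_pos le_rfl]
            push_cast; field_simp; ring
          · rw [if_neg hjq, if_pos (by omega)]
            push_cast; field_simp; ring
        · rw [if_neg (by omega : ¬ j < 7*q), if_neg (by omega : ¬ j+1 ≤ q),
            if_neg (by omega : ¬ j+1 ≤ 2*q), if_neg (by omega : ¬ j+1 ≤ 6*q),
            if_neg (by omega : ¬ j+1 ≤ 7*q),
            if_neg (by omega : ¬ j ≤ q), if_neg (by omega : ¬ j ≤ 2*q),
            if_neg (by omega : ¬ j ≤ 6*q)]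
          by_cases hjq : j ≤ 7*q
          · have hjq' : j = 7*q := by omega
            subst hjq'
            rw [if_pos le_rfl]
            push_cast; field_simp; ring
          · rw [if_neg hjq]
            push_cast; field_simp; ring


lemma mvt_abs {f f' : ℝ → ℝ} {s : Set ℝ} (hs : Convex ℝ s) {K : ℝ}
    (hf : ∀ x ∈ s, HasDerivWithinAt f (f' x) s x)
    (hK : ∀ x ∈ s, |f' x| ≤ K) {a b : ℝ} (ha : a ∈ s) (hb : b ∈ s) :
    |f b - f a| ≤ K * |b - a| := by
  have := hs.norm_image_sub_le_of_norm_hasDerivWithin_le (f' := f') (C := K)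
    hf (fun x hx => by simpa [Real.norm_eq_abs] using hK x hx) ha hb
  simpa [Real.norm_eq_abs] using this

lemma uIcc_abs_le {c x y : ℝ} (hy : y ∈ Set.uIcc c x) : |y - c| ≤ |x - c| := by
  rw [Set.mem_uIcc] at hy
  rcases hy with ⟨h1, h2⟩ | ⟨h1, h2⟩ <;> rw [abs_le] <;>
    constructor <;> simp [abs_nonneg] <;> nlinarith [abs_nonneg (x - c), le_abs_self (x - c), neg_abs_le (x - c)]

lemma taylor1 {f f' f'' : ℝ → ℝ} {s : Set ℝ} (hs : Convex ℝ s) {K : ℝ}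
    (h1 : ∀ y ∈ s, HasDerivWithinAt f (f' y) s y)
    (h2 : ∀ y ∈ s, HasDerivWithinAt f' (f'' y) s y)
    (hK : ∀ y ∈ s, |f'' y| ≤ K)
    {c x : ℝ} (hc : c ∈ s) (hx : x ∈ s) :
    |f x - f c - (x - c) * f' c| ≤ K * |x - c| ^ 2 := by
  have hsub : Set.uIcc c x ⊆ s := hs.ordConnected.uIcc_subset hc hx
  have hcu : c ∈ Set.uIcc c x := Set.left_mem_uIcc
  have hxu : x ∈ Set.uIcc c x := Set.right_mem_uIcc
  set t := Set.uIcc c x with ht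
  have hconv : Convex ℝ t := convex_uIcc c x
  -- derivative bound for g y = f y - y * f' c
  have hg : ∀ y ∈ t, HasDerivWithinAt (fun y => f y - y * f' c) (f' y - f' c) t y := by
    intro y hy
    exact (((h1 y (hsub hy)).mono hsub).sub ((hasDerivWithinAt_id y t).mul_const (f' c))).congr_deriv (by ring)
  have hK0 : 0 ≤ K := le_trans (abs_nonneg _) (hK c hc)
  have hgK : ∀ y ∈ t, |f' y - f' c| ≤ K * |x - c| := by
    intro y hy
    have := mvt_abs hconv (fun z hz => (h2 z (hsub hz)).mono hsub)
      (fun z hz => hK z (hsub hz)) hcu hy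
    exact this.trans (mul_le_mul_of_nonneg_left (uIcc_abs_le hy) hK0)
  have := mvt_abs hconv hg hgK hcu hxu
  calc |f x - f c - (x - c) * f' c|
      = |(f x - x * f' c) - (f c - c * f' c)| := by ring_nf
    _ ≤ K * |x - c| * |x - c| := this
    _ = K * |x - c| ^ 2 := by ring

lemma taylor2 {f f' f'' f''' : ℝ → ℝ} {s : Set ℝ} (hs : Convex ℝ s) {K : ℝ}
    (h1 : ∀ y ∈ s, HasDerivWithinAt f (f' y) s y)
    (h2 : ∀ y ∈ s, HasDerivWithinAt f' (f'' y) s y)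
    (h3 : ∀ y ∈ s, HasDerivWithinAt f'' (f''' y) s y)
    (hK : ∀ y ∈ s, |f''' y| ≤ K)
    {c x : ℝ} (hc : c ∈ s) (hx : x ∈ s) :
    |f x - f c - (x - c) * f' c - (x - c) ^ 2 / 2 * f'' c| ≤ K * |x - c| ^ 3 := by
  have hsub : Set.uIcc c x ⊆ s := hs.ordConnected.uIcc_subset hc hx
  have hcu : c ∈ Set.uIcc c x := Set.left_mem_uIcc
  have hxu : x ∈ Set.uIcc c x := Set.right_mem_uIcc
  set t := Set.uIcc c x with ht
  have hconv : Convex ℝ t := convex_uIcc c x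
  have hg : ∀ y ∈ t, HasDerivWithinAt
      (fun y => f y - y * f' c - (y - c) ^ 2 / 2 * f'' c)
      (f' y - f' c - (y - c) * f'' c) t y := by
    intro y hy
    have hpoly : HasDerivWithinAt (fun y : ℝ => (y - c) ^ 2 / 2 * f'' c)
        ((y - c) * f'' c) t y := by
      have h0 : HasDerivWithinAt (fun y : ℝ => y - c) 1 t y :=
        (hasDerivWithinAt_id y t).sub_const c
      have := ((h0.pow 2).div_const 2).mul_const (f'' c)
      exact this.congr_deriv (by push_cast; ring)
    exact ((((h1 y (hsub hy)).mono hsub).sub ((hasDerivWithinAt_id y t).mul_const (f' c))).sub hpoly).congr_deriv (by ring)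
  have hgK : ∀ y ∈ t, |f' y - f' c - (y - c) * f'' c| ≤ K * |x - c| ^ 2 := by
    intro y hy
    have := taylor1 hconv (fun z hz => (h2 z (hsub hz)).mono hsub)
      (fun z hz => (h3 z (hsub hz)).mono hsub) (fun z hz => hK z (hsub hz)) hcu hy
    have hK0 : 0 ≤ K := le_trans (abs_nonneg _) (hK c hc)
    exact this.trans (mul_le_mul_of_nonneg_left
      (pow_le_pow_left₀ (abs_nonneg _) (uIcc_abs_le hy) 2) hK0)
  have := mvt_abs hconv hg hgK hcu hxu
  calc |f x - f c - (x - c) * f' c - (x - c) ^ 2 / 2 * f'' c|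
      = |(f x - x * f' c - (x - c) ^ 2 / 2 * f'' c) - (f c - c * f' c - (c - c) ^ 2 / 2 * f'' c)| := by
        ring_nf
    _ ≤ K * |x - c| ^ 2 * |x - c| := this
    _ = K * |x - c| ^ 3 := by ring

/- STATEMENT 19: Error estimate for the smooth component (two equations).
The smooth component `v` is given together with its iterated partial
derivatives `vD i l m = ∂ₓ^l ∂ₜ^m v_i` for `(l,m)` with `m ≤ 2 ∧ l = 0`,
or `l ≤ 4 ∧ m = 0`, or `l ≤ 2 ∧ m = 1`.  The constant `C` depends only on
`C₀`, `α`, `T` and the sup-norm bound `KA` of `A`; it is chosen before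
`ε₁, ε₂, A, f, v, N = 8q, M, V`, hence is independent of them. -/
set_option maxHeartbeats 1000000 in
theorem stmt_19
    (T : ℝ) (hT : 0 < T) (α : ℝ) (hα0 : 0 < α) (C0 KA : ℝ) :
    ∃ C : ℝ, 0 < C ∧
      ∀ (ε : Fin 2 → ℝ), (∀ i, 0 < ε i) → ε 0 < ε 1 → (∀ i, ε i < 1) →
      Real.sqrt (ε 1) ≤ Real.sqrt α / 6 →
      -- the matrix A, bounded in sup norm by KA :
      ∀ (a : Fin 2 → Fin 2 → ℝ → ℝ → ℝ),
      (∀ i j, ContinuousOn (fun p : ℝ × ℝ => a i j p.1 p.2)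
        (Set.Icc 0 1 ×ˢ Set.Icc 0 T)) →
      (∀ i j, ∀ x ∈ Set.Icc (0:ℝ) 1, ∀ t ∈ Set.Icc (0:ℝ) T, |a i j x t| ≤ KA) →
      (∀ i, ∀ x ∈ Set.Icc (0:ℝ) 1, ∀ t ∈ Set.Icc (0:ℝ) T,
        ∑ j ∈ Finset.univ.erase i, |a i j x t| < a i i x t) →
      (∀ i j, i ≠ j → ∀ x ∈ Set.Icc (0:ℝ) 1, ∀ t ∈ Set.Icc (0:ℝ) T,
        a i j x t ≤ 0) →
      (∀ i, ∀ x ∈ Set.Icc (0:ℝ) 1, ∀ t ∈ Set.Icc (0:ℝ) T, α < ∑ j, a i j x t) →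
      ∀ (f : Fin 2 → ℝ → ℝ → ℝ),
      -- the smooth component v with its partial derivatives :
      ∀ (vD : Fin 2 → ℕ → ℕ → ℝ → ℝ → ℝ),
      (∀ i l m, (l + 1 ≤ 4 ∧ m = 0) ∨ (l + 1 ≤ 2 ∧ m = 1) →
        ∀ t ∈ Set.Icc (0:ℝ) T, ∀ x ∈ Set.Icc (0:ℝ) 1,
        HasDerivWithinAt (fun y => vD i l m y t) (vD i (l + 1) m x t)
          (Set.Icc 0 1) x) →
      (∀ i l m, (l = 0 ∧ m + 1 ≤ 2) ∨ (l ≤ 2 ∧ m + 1 = 1) →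
        ∀ x ∈ Set.Icc (0:ℝ) 1, ∀ t ∈ Set.Icc (0:ℝ) T,
        HasDerivWithinAt (fun s => vD i l m x s) (vD i l (m + 1) x t)
          (Set.Icc 0 T) t) →
      (∀ i l m, (m ≤ 2 ∧ l = 0) ∨ (l ≤ 4 ∧ m = 0) ∨ (l ≤ 2 ∧ m = 1) →
        ContinuousOn (fun p : ℝ × ℝ => vD i l m p.1 p.2)
          (Set.Icc 0 1 ×ˢ Set.Icc 0 T)) →
      -- v satisfies L v = f on Ω :
      (∀ i, ∀ x ∈ Set.Ioo (0:ℝ) 1, ∀ t ∈ Set.Ioc (0:ℝ) T,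
        vD i 0 1 x t - ε i * vD i 2 0 x t +
          ∑ j, a i j x t * vD j 0 0 x t = f i x t) →
      -- the bounds on v and its derivatives :
      (∀ i, ∀ x ∈ Set.Icc (0:ℝ) 1, ∀ t ∈ Set.Icc (0:ℝ) T,
        (∀ m ≤ 2, |vD i 0 m x t| ≤ C0) ∧
        (∀ l, 1 ≤ l → l ≤ 2 → |vD i l 0 x t| ≤ C0) ∧
        (∀ l, 3 ≤ l → l ≤ 4 →
          |vD i l 0 x t| ≤ C0 * (ε i) ^ (-((l : ℝ) - 2) / 2)) ∧
        (∀ l, 1 ≤ l → l ≤ 2 → |vD i l 1 x t| ≤ C0)) →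
      -- the Shishkin grid :
      ∀ q : ℕ, 3 ≤ q → ∀ M : ℕ, 1 ≤ M →
      ∀ X : ℕ → ℝ, (∀ j, X j = shMesh α (ε 0) (ε 1) q j) →
      ∀ tg : ℕ → ℝ, (∀ k : ℕ, tg k = (k : ℝ) * T / (M : ℝ)) →
      -- the discrete smooth component V :
      ∀ (V : Fin 2 → ℕ → ℕ → ℝ),
      (∀ i, ∀ j, 1 ≤ j → j ≤ 8 * q - 1 → ∀ k, 1 ≤ k → k ≤ M →
        (V i j k - V i j (k - 1)) / (T / (M : ℝ))
          - ε i * (2 / (X (j + 1) - X (j - 1)) *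
              ((V i (j + 1) k - V i j k) / (X (j + 1) - X j)
                - (V i j k - V i (j - 1) k) / (X j - X (j - 1))))
          + ∑ m, a i m (X j) (tg k) * V m j k = f i (X j) (tg k)) →
      (∀ i, ∀ k, 1 ≤ k → k ≤ M →
        V i 0 k - Real.sqrt (ε i) * ((V i 1 k - V i 0 k) / (X 1 - X 0)) =
          vD i 0 0 0 (tg k) - Real.sqrt (ε i) * vD i 1 0 0 (tg k)) →
      (∀ i, ∀ k, 1 ≤ k → k ≤ M →
        V i (8 * q) k + Real.sqrt (ε i) *
            ((V i (8 * q) k - V i (8 * q - 1) k) / (X (8 * q) - X (8 * q - 1))) =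
          vD i 0 0 1 (tg k) + Real.sqrt (ε i) * vD i 1 0 1 (tg k)) →
      (∀ i, ∀ j ≤ 8 * q, V i j 0 = vD i 0 0 (X j) 0) →
      -- the error estimate :
      ∀ i, ∀ j ≤ 8 * q, ∀ k ≤ M,
        |V i j k - vD i 0 0 (X j) (tg k)| ≤
          C * ((M : ℝ)⁻¹ + (8 * (q : ℝ))⁻¹ * Real.log (8 * (q : ℝ))) := by
  classical
  set C0m : ℝ := max C0 0 with hC0m
  have hC0m0 : 0 ≤ C0m := le_max_right _ _
  refine ⟨C0m * (T + 8) / α + C0m + 1, by positivity, ?_⟩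
  set C : ℝ := C0m * (T + 8) / α + C0m + 1 with hCdef
  have hCpos : 0 < C := by rw [hCdef]; positivity
  clear_value C
  intro ε hεpos hε01 hεlt1 hεα a hacont haKA hdiag hoff hrow f vD hDx hDt hvcont
    hPDE hbnd q hq M hM X hX tg htg V hV hB0 hB1 hinit
  have hq1 : 1 ≤ q := by omega
  have hqR : (0:ℝ) < (q:ℝ) := by exact_mod_cast (by omega : 0 < q)
  have hq3 : (3:ℝ) ≤ (q:ℝ) := by exact_mod_cast hq
  have hMR : (0:ℝ) < (M:ℝ) := by exact_mod_cast hM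
  have hNR : (1:ℝ) < 8*(q:ℝ) := by nlinarith
  have hlogpos : 0 < Real.log (8*(q:ℝ)) := Real.log_pos hNR
  have hlog1 : 1 ≤ Real.log (8*(q:ℝ)) := by
    rw [Real.le_log_iff_exp_le (by linarith)]
    have h3 : Real.exp 1 < 2.7182818286 := Real.exp_one_lt_d9
    nlinarith
  set σ2 : ℝ := min (1/4) (2 * Real.sqrt (ε 1/α) * Real.log (8*(q:ℝ))) with hσ2d
  set σ1 : ℝ := min (σ2/2) (2 * Real.sqrt (ε 0/α) * Real.log (8*(q:ℝ))) with hσ1d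
  have hXpw : ∀ j, X j = pw σ1 σ2 q j := by
    intro j; rw [hX j, hσ1d, hσ2d]; exact shMesh_eq_pw _ _ _ _ _
  have hσ2pos : 0 < σ2 := by
    refine lt_min (by norm_num) ?_
    have h := Real.sqrt_pos.2 (div_pos (hεpos 1) hα0)
    positivity
  have hσ2le : σ2 ≤ 1/4 := min_le_left _ _
  have hσ1le : σ1 ≤ σ2/2 := min_le_left _ _
  have hσ1pos : 0 < σ1 := by
    refine lt_min (by linarith) ?_
    have h := Real.sqrt_pos.2 (div_pos (hεpos 0) hα0)
    positivity
  clear_value σ1 σ2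
  have hstep_eq : ∀ j', j' < 8*q → X (j'+1) - X j' =
      (if j' < q then σ1/q else if j' < 2*q then (σ2-σ1)/q
       else if j' < 6*q then (1-2*σ2)/(4*q) else if j' < 7*q then (σ2-σ1)/q
       else σ1/q) := by
    intro j' hj'; rw [hXpw, hXpw]; exact pw_step σ1 σ2 q hq1 j' hj'
  have hstep_pos : ∀ j', j' < 8*q → 0 < X (j'+1) - X j' := by
    intro j' hj'; rw [hstep_eq j' hj']
    split_ifs
    · positivity
    · exact div_pos (by linarith) hqR
    · exact div_pos (by linarith) (by positivity)
    · exact div_pos (by linarith) hqR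
    · positivity
  have hstep_le : ∀ j', j' < 8*q → X (j'+1) - X j' ≤ 1/(4*(q:ℝ)) := by
    intro j' hj'; rw [hstep_eq j' hj']
    have h1 : σ1/(q:ℝ) ≤ 1/(4*(q:ℝ)) := by
      rw [div_le_div_iff₀ hqR (by positivity)]; nlinarith
    have h2 : (σ2-σ1)/(q:ℝ) ≤ 1/(4*(q:ℝ)) := by
      rw [div_le_div_iff₀ hqR (by positivity)]; nlinarith
    have h3 : (1-2*σ2)/(4*(q:ℝ)) ≤ 1/(4*(q:ℝ)) := by
      rw [div_le_div_iff₀ (by positivity) (by positivity)]; nlinarith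
    split_ifs <;> first | exact h1 | exact h2 | exact h3
  have hX0 : X 0 = 0 := by rw [hXpw]; exact pw_zero _ _ _
  have hXN : X (8*q) = 1 := by rw [hXpw]; exact pw_last _ _ _ hq1
  have hmono : ∀ j1 j2 : ℕ, j1 ≤ j2 → j2 ≤ 8*q → X j1 ≤ X j2 := by
    intro j1 j2 h
    induction j2, h using Nat.le_induction with
    | base => intro _; exact le_rfl
    | succ n hn ih =>
      intro hle
      have h1 : n < 8*q := by omega
      have h2 := hstep_pos n h1
      have h3 := ih (by omega)
      linarith
  have hXmem : ∀ j' ≤ 8*q, X j' ∈ Set.Icc (0:ℝ) 1 := by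
    intro j' hj'
    constructor
    · rw [← hX0]; exact hmono 0 j' (by omega) hj'
    · rw [← hXN]; exact hmono j' (8*q) hj' le_rfl
  have hXIoo : ∀ j', 1 ≤ j' → j' < 8*q → X j' ∈ Set.Ioo (0:ℝ) 1 := by
    intro j' h1 h2
    constructor
    · have ha := hstep_pos 0 (by omega)
      have hb := hmono 1 j' h1 (by omega)
      rw [hX0] at ha; simpa using lt_of_lt_of_le (by linarith) hb
    · have ha := hstep_pos j' h2
      have hb := hmono (j'+1) (8*q) (by omega) le_rfl
      rw [hXN] at hb; linarith
  have htgmem : ∀ k' ≤ M, tg k' ∈ Set.Icc 0 T := by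
    intro k' hk'
    rw [htg]
    constructor
    · positivity
    · rw [div_le_iff₀ hMR]
      have h1 : (k':ℝ) ≤ (M:ℝ) := by exact_mod_cast hk'
      have := mul_le_mul_of_nonneg_right h1 hT.le
      linarith
  have htgpos : ∀ k', 1 ≤ k' → 0 < tg k' := by
    intro k' hk'
    rw [htg]
    have h1 : (1:ℝ) ≤ (k':ℝ) := by exact_mod_cast hk'
    exact div_pos (mul_pos (by linarith) hT) hMR
  set S : ℝ := (M:ℝ)⁻¹ + (8*(q:ℝ))⁻¹ * Real.log (8*(q:ℝ)) with hSdef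
  have hSpos : 0 < S := by positivity
  clear_value S
  have hSM : (M:ℝ)⁻¹ ≤ S := by
    have : 0 ≤ (8*(q:ℝ))⁻¹ * Real.log (8*(q:ℝ)) := by positivity
    simp only [hSdef]; linarith
  have hSq8 : (1:ℝ)/(8*(q:ℝ)) ≤ S := by
    have h8 : (8*(q:ℝ))⁻¹ ≤ (8*(q:ℝ))⁻¹ * Real.log (8*(q:ℝ)) :=
      le_mul_of_one_le_right (by positivity) hlog1
    have hM0 : (0:ℝ) ≤ (M:ℝ)⁻¹ := by positivity
    simp only [hSdef, one_div]; linarith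
  have hSq : (1:ℝ)/(q:ℝ) ≤ 8*S := by
    have := hSq8
    have h : (1:ℝ)/(q:ℝ) = 8 * (1/(8*(q:ℝ))) := by field_simp
    rw [h]; linarith
  have hC0 : 0 ≤ C0 := by
    have h := (hbnd 0 0 (by norm_num) 0 ⟨le_refl 0, hT.le⟩).1 0
      (by norm_num)
    exact le_trans (abs_nonneg _) h
  have hCC0 : C0 ≤ C0m := le_max_left _ _
  have hCSpos : 0 < C * S := mul_pos hCpos hSpos
  set Δ : ℝ := T/(M:ℝ) with hΔd
  have hΔpos : 0 < Δ := by rw [hΔd]; positivity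
  clear_value Δ
  have hτBd : C0 * Δ + C0 * (1/(q:ℝ)) ≤ α * (C * S) := by
    have h1 : C0 * Δ ≤ C0m * (T * S) := by
      have ha : Δ ≤ T * S := by
        rw [hΔd, div_eq_mul_inv]
        exact mul_le_mul_of_nonneg_left hSM hT.le
      calc C0 * Δ ≤ C0m * Δ := mul_le_mul_of_nonneg_right hCC0 hΔpos.le
        _ ≤ C0m * (T * S) := mul_le_mul_of_nonneg_left ha hC0m0
    have h2 : C0 * (1/(q:ℝ)) ≤ C0m * (8 * S) := by
      calc C0 * (1/(q:ℝ)) ≤ C0m * (1/(q:ℝ)) :=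
            mul_le_mul_of_nonneg_right hCC0 (by positivity)
        _ ≤ C0m * (8 * S) := mul_le_mul_of_nonneg_left hSq hC0m0
    have h3 : C0m * (T + 8) * S ≤ α * (C * S) := by
      have key : α * C = C0m*(T+8) + α*(C0m+1) := by rw [hCdef]; field_simp; ring
      have hαC : C0m*(T+8) ≤ α * C := by nlinarith
      calc C0m * (T+8) * S ≤ (α * C) * S := mul_le_mul_of_nonneg_right hαC hSpos.le
        _ = α * (C * S) := by ring
    have h7 : C0m * (T * S) + C0m * (8 * S) = C0m * (T + 8) * S := by ring
    linarith
  have hBd1 : C0 * (1/(8*(q:ℝ))) ≤ C * S := by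
    have h1 : C0 * (1/(8*(q:ℝ))) ≤ C0m * S := by
      calc C0 * (1/(8*(q:ℝ))) ≤ C0m * (1/(8*(q:ℝ))) :=
            mul_le_mul_of_nonneg_right hCC0 (by positivity)
        _ ≤ C0m * S := mul_le_mul_of_nonneg_left hSq8 hC0m0
    have h2 : C0m * S ≤ C * S := by
      apply mul_le_mul_of_nonneg_right _ hSpos.le
      rw [hCdef]
      have : 0 ≤ C0m * (T+8) / α := by positivity
      linarith
    exact le_trans h1 h2
  -- error function and its level maxima
  set e : Fin 2 → ℕ → ℕ → ℝ := fun i j k => V i j k - vD i 0 0 (X j) (tg k) with he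
  have hgridne : ((Finset.univ : Finset (Fin 2)) ×ˢ Finset.range (8*q+1)).Nonempty :=
    ⟨(0,0), by simp⟩
  set E : ℕ → ℝ := fun k =>
    ((Finset.univ : Finset (Fin 2)) ×ˢ Finset.range (8*q+1)).sup'
      hgridne (fun p => |e p.1 p.2 k|) with hEdef
  have hEub : ∀ k' (i' : Fin 2) j', j' ≤ 8*q → |e i' j' k'| ≤ E k' := by
    intro k' i' j' hj'
    exact Finset.le_sup' (f := fun p : Fin 2 × ℕ => |e p.1 p.2 k'|) (b := (i', j'))
      (by simp [Finset.mem_product]; omega)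
  have hEnn : ∀ k', 0 ≤ E k' := fun k' =>
    le_trans (abs_nonneg _) (hEub k' 0 0 (by omega))
  clear_value e E
  -- per-level maximum principle
  have hlev : ∀ k, 1 ≤ k → k ≤ M → E k ≤ max (E (k-1)) (C*S) := by
    intro k hk1 hkM
    have htk : tg k ∈ Set.Icc 0 T := htgmem k hkM
    obtain ⟨p, hpmem, hpsup⟩ := Finset.exists_mem_eq_sup' hgridne
      (fun p : Fin 2 × ℕ => |e p.1 p.2 k|)
    obtain ⟨i, j⟩ := p
    have hEk : E k = |e i j k| := by simp only [hEdef]; simpa using hpsup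
    have hj8 : j ≤ 8*q := by
      simp only [Finset.mem_product, Finset.mem_range] at hpmem; omega
    set s : ℝ := if 0 ≤ e i j k then 1 else -1 with hsd
    have hspm : s = 1 ∨ s = -1 := by
      rw [hsd]; split_ifs <;> simp
    have hs_abs : ∀ y : ℝ, s * y ≤ |y| := by
      intro y
      rcases hspm with h | h <;> rw [h]
      · simpa using le_abs_self y
      · rw [neg_one_mul]; exact neg_le_abs y
    have hsEk : s * e i j k = E k := by
      rw [hEk, hsd]
      split_ifs with h
      · rw [one_mul, abs_of_nonneg h]
      · rw [abs_of_neg (lt_of_not_ge h)]; ring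
    have hsle : ∀ (k' : ℕ) (i' : Fin 2) (j' : ℕ), j' ≤ 8*q → s * e i' j' k' ≤ E k' :=
      fun k' i' j' hj' => le_trans (hs_abs _) (hEub k' i' j' hj')
    have hsqε : Real.sqrt (ε i) ≤ 1 := by
      rw [show (1:ℝ) = Real.sqrt 1 by rw [Real.sqrt_one]]
      exact Real.sqrt_le_sqrt (hεlt1 i).le
    by_cases hj0 : j = 0
    · -- left boundary point
      subst hj0
      have h0eq := hB0 i k hk1 hkM
      have hd : 0 < X 1 - X 0 := by simpa using hstep_pos 0 (by omega)
      rw [hX0] at h0eq hd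
      rw [sub_zero] at hd
      have hd' : 0 < X 1 := hd
      rw [sub_zero] at h0eq
      have hd8 : X 1 ≤ 1/(8*(q:ℝ)) := by
        have h := hstep_eq 0 (by omega)
        rw [if_pos (by omega : 0 < q)] at h
        rw [hX0, sub_zero] at h
        rw [show X (0+1) = X 1 from rfl] at h
        rw [h, div_le_div_iff₀ hqR (by positivity)]
        linarith [mul_le_mul_of_nonneg_right (show σ1 ≤ (1:ℝ)/8 by linarith) hqR.le]
      have htay := taylor1 (convex_Icc (0:ℝ) 1)
        (f := fun y => vD i 0 0 y (tg k)) (f' := fun y => vD i 1 0 y (tg k))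
        (f'' := fun y => vD i 2 0 y (tg k)) (K := C0)
        (fun y hy => hDx i 0 0 (Or.inl ⟨by norm_num, rfl⟩) (tg k) htk y hy)
        (fun y hy => hDx i 1 0 (Or.inl ⟨by norm_num, rfl⟩) (tg k) htk y hy)
        (fun y hy => (hbnd i y hy (tg k) htk).2.1 2 (by norm_num) le_rfl)
        (c := 0) (x := X 1) (by norm_num) (hXmem 1 (by omega))
      simp only [sub_zero] at htay
      have hTE : |vD i 0 0 (X 1) (tg k) - vD i 0 0 0 (tg k) - X 1 * vD i 1 0 0 (tg k)|
          ≤ C0 * (X 1)^2 := by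
        calc |vD i 0 0 (X 1) (tg k) - vD i 0 0 0 (tg k) - X 1 * vD i 1 0 0 (tg k)|
            ≤ C0 * |X 1|^2 := htay
          _ = C0 * (X 1)^2 := by rw [sq_abs]
      have hkey : e i 0 k - Real.sqrt (ε i) * ((e i 1 k - e i 0 k)/(X 1)) =
          Real.sqrt (ε i) / (X 1) *
            (vD i 0 0 (X 1) (tg k) - vD i 0 0 0 (tg k) - X 1 * vD i 1 0 0 (tg k)) := by
        simp only [he]
        rw [hX0]
        have hne : X 1 ≠ 0 := ne_of_gt hd'
        field_simp at h0eq ⊢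
        linear_combination h0eq
      have hP : |e i 0 k - Real.sqrt (ε i) * ((e i 1 k - e i 0 k)/(X 1))|
          ≤ C0 * (1/(8*(q:ℝ))) := by
        rw [hkey]
        rw [abs_mul, abs_of_nonneg (by positivity : (0:ℝ) ≤ Real.sqrt (ε i) / X 1)]
        calc Real.sqrt (ε i) / X 1 *
              |vD i 0 0 (X 1) (tg k) - vD i 0 0 0 (tg k) - X 1 * vD i 1 0 0 (tg k)|
            ≤ Real.sqrt (ε i) / X 1 * (C0 * (X 1)^2) :=
              mul_le_mul_of_nonneg_left hTE (by positivity)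
          _ = Real.sqrt (ε i) * C0 * X 1 := by field_simp
          _ ≤ 1 * C0 * X 1 :=
              mul_le_mul_of_nonneg_right (mul_le_mul_of_nonneg_right hsqε hC0) hd'.le
          _ = C0 * X 1 := by ring
          _ ≤ C0 * (1/(8*(q:ℝ))) := mul_le_mul_of_nonneg_left hd8 hC0
      have hse1 : s * e i 1 k ≤ E k := hsle k i 1 (by omega)
      have hP2 : E k ≤ s * (e i 0 k - Real.sqrt (ε i) * ((e i 1 k - e i 0 k)/(X 1))) := by
        have hexp : s * (e i 0 k - Real.sqrt (ε i) * ((e i 1 k - e i 0 k)/(X 1))) =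
            s * e i 0 k - Real.sqrt (ε i) * ((s * e i 1 k - s * e i 0 k)/(X 1)) := by
          ring
        rw [hexp, hsEk]
        have h2 : (s * e i 1 k - E k)/(X 1) ≤ 0 :=
          div_nonpos_of_nonpos_of_nonneg (by linarith) hd'.le
        linarith [mul_nonneg (Real.sqrt_nonneg (ε i)) (neg_nonneg.2 h2)]
      have hfin : E k ≤ C0 * (1/(8*(q:ℝ))) := le_trans hP2 (le_trans (hs_abs _) hP)
      exact le_max_of_le_right (le_trans hfin hBd1)
    by_cases hjN : j = 8*q
    · -- right boundary point
      subst hjN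
      have h1eq := hB1 i k hk1 hkM
      have hidx : 8*q - 1 + 1 = 8*q := by omega
      have hd : 0 < X (8*q) - X (8*q-1) := by
        have h := hstep_pos (8*q-1) (by omega); rwa [hidx] at h
      rw [hXN] at h1eq hd
      have hd8 : 1 - X (8*q-1) ≤ 1/(8*(q:ℝ)) := by
        have h := hstep_eq (8*q-1) (by omega)
        rw [hidx, hXN] at h
        rw [if_neg (by omega), if_neg (by omega), if_neg (by omega), if_neg (by omega)] at h
        rw [h, div_le_div_iff₀ hqR (by positivity)]
        linarith [mul_le_mul_of_nonneg_right (show σ1 ≤ (1:ℝ)/8 by linarith) hqR.le]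
      have htay := taylor1 (convex_Icc (0:ℝ) 1)
        (f := fun y => vD i 0 0 y (tg k)) (f' := fun y => vD i 1 0 y (tg k))
        (f'' := fun y => vD i 2 0 y (tg k)) (K := C0)
        (fun y hy => hDx i 0 0 (Or.inl ⟨by norm_num, rfl⟩) (tg k) htk y hy)
        (fun y hy => hDx i 1 0 (Or.inl ⟨by norm_num, rfl⟩) (tg k) htk y hy)
        (fun y hy => (hbnd i y hy (tg k) htk).2.1 2 (by norm_num) le_rfl)
        (c := 1) (x := X (8*q-1)) (by norm_num) (hXmem (8*q-1) (by omega))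
      have hTE : |vD i 0 0 (X (8*q-1)) (tg k) - vD i 0 0 1 (tg k)
            - (X (8*q-1) - 1) * vD i 1 0 1 (tg k)|
          ≤ C0 * (1 - X (8*q-1))^2 := by
        calc |vD i 0 0 (X (8*q-1)) (tg k) - vD i 0 0 1 (tg k)
              - (X (8*q-1) - 1) * vD i 1 0 1 (tg k)|
            ≤ C0 * |X (8*q-1) - 1|^2 := htay
          _ = C0 * (1 - X (8*q-1))^2 := by
              rw [abs_sub_comm, abs_of_nonneg (by linarith)]
      have hkey : e i (8*q) k + Real.sqrt (ε i) *
            ((e i (8*q) k - e i (8*q-1) k)/(1 - X (8*q-1))) =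
          Real.sqrt (ε i) / (1 - X (8*q-1)) *
            (vD i 0 0 (X (8*q-1)) (tg k) - vD i 0 0 1 (tg k)
              - (X (8*q-1) - 1) * vD i 1 0 1 (tg k)) := by
        simp only [he]
        rw [hXN]
        have hne : 1 - X (8*q-1) ≠ 0 := ne_of_gt hd
        field_simp at h1eq ⊢
        linear_combination h1eq
      have hP : |e i (8*q) k + Real.sqrt (ε i) *
            ((e i (8*q) k - e i (8*q-1) k)/(1 - X (8*q-1)))|
          ≤ C0 * (1/(8*(q:ℝ))) := by
        rw [hkey]
        rw [abs_mul, abs_of_nonneg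
          (by positivity : (0:ℝ) ≤ Real.sqrt (ε i) / (1 - X (8*q-1)))]
        calc Real.sqrt (ε i) / (1 - X (8*q-1)) *
              |vD i 0 0 (X (8*q-1)) (tg k) - vD i 0 0 1 (tg k)
                - (X (8*q-1) - 1) * vD i 1 0 1 (tg k)|
            ≤ Real.sqrt (ε i) / (1 - X (8*q-1)) * (C0 * (1 - X (8*q-1))^2) :=
              mul_le_mul_of_nonneg_left hTE (by positivity)
          _ = Real.sqrt (ε i) * C0 * (1 - X (8*q-1)) := by field_simp
          _ ≤ 1 * C0 * (1 - X (8*q-1)) :=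
              mul_le_mul_of_nonneg_right (mul_le_mul_of_nonneg_right hsqε hC0) hd.le
          _ = C0 * (1 - X (8*q-1)) := by ring
          _ ≤ C0 * (1/(8*(q:ℝ))) := mul_le_mul_of_nonneg_left hd8 hC0
      have hse1 : s * e i (8*q-1) k ≤ E k := hsle k i (8*q-1) (by omega)
      have hP2 : E k ≤ s * (e i (8*q) k + Real.sqrt (ε i) *
            ((e i (8*q) k - e i (8*q-1) k)/(1 - X (8*q-1)))) := by
        have hexp : s * (e i (8*q) k + Real.sqrt (ε i) *
              ((e i (8*q) k - e i (8*q-1) k)/(1 - X (8*q-1)))) =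
            s * e i (8*q) k + Real.sqrt (ε i) *
              ((s * e i (8*q) k - s * e i (8*q-1) k)/(1 - X (8*q-1))) := by
          ring
        rw [hexp, hsEk]
        have h2 : 0 ≤ (E k - s * e i (8*q-1) k)/(1 - X (8*q-1)) :=
          div_nonneg (by linarith) hd.le
        linarith [mul_nonneg (Real.sqrt_nonneg (ε i)) h2]
      have hfin : E k ≤ C0 * (1/(8*(q:ℝ))) := le_trans hP2 (le_trans (hs_abs _) hP)
      exact le_max_of_le_right (le_trans hfin hBd1)
    -- interior point
    have hj1 : 1 ≤ j := by omega
    have hjlt : j < 8*q := by omega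
    have hXj : X j ∈ Set.Icc (0:ℝ) 1 := hXmem j hj8
    have hXjIoo : X j ∈ Set.Ioo (0:ℝ) 1 := hXIoo j hj1 hjlt
    have hXp : X (j+1) ∈ Set.Icc (0:ℝ) 1 := hXmem (j+1) (by omega)
    have hXm : X (j-1) ∈ Set.Icc (0:ℝ) 1 := hXmem (j-1) (by omega)
    have hidx : j - 1 + 1 = j := by omega
    have hpp : 0 < X j - X (j-1) := by
      have h := hstep_pos (j-1) (by omega); rwa [hidx] at h
    have hpp' : 0 < X (j+1) - X j := hstep_pos j hjlt
    have hple : X j - X (j-1) ≤ 1/(4*(q:ℝ)) := by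
      have h := hstep_le (j-1) (by omega); rwa [hidx] at h
    have hple' : X (j+1) - X j ≤ 1/(4*(q:ℝ)) := hstep_le j hjlt
    have hsum : X (j+1) - X (j-1) = (X (j+1) - X j) + (X j - X (j-1)) := by ring
    have hsumpos : 0 < X (j+1) - X (j-1) := by rw [hsum]; linarith
    have hEq := hV i j hj1 (by omega) k hk1 hkM
    have hPDEeq := hPDE i (X j) hXjIoo (tg k) ⟨htgpos k hk1, (htgmem k hkM).2⟩
    simp only [Fin.sum_univ_two] at hEq hPDEeq
    -- time Taylor
    have hkm : tg (k-1) = tg k - Δ := by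
      rw [htg, htg, hΔd, Nat.cast_sub hk1]
      field_simp
      ring
    have htkm : tg (k-1) ∈ Set.Icc 0 T := htgmem (k-1) (by omega)
    have htayt := taylor1 (convex_Icc (0:ℝ) T)
      (f := fun y => vD i 0 0 (X j) y) (f' := fun y => vD i 0 1 (X j) y)
      (f'' := fun y => vD i 0 2 (X j) y) (K := C0)
      (fun y hy => hDt i 0 0 (Or.inl ⟨rfl, by norm_num⟩) (X j) hXj y hy)
      (fun y hy => hDt i 0 1 (Or.inl ⟨rfl, by norm_num⟩) (X j) hXj y hy)
      (fun y hy => (hbnd i (X j) hXj y hy).1 2 le_rfl)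
      (c := tg k) (x := tg (k-1)) htk htkm
    have hRt : |(vD i 0 0 (X j) (tg k) - vD i 0 0 (X j) (tg (k-1)))/Δ
          - vD i 0 1 (X j) (tg k)| ≤ C0 * Δ := by
      have hid2 : (vD i 0 0 (X j) (tg k) - vD i 0 0 (X j) (tg (k-1)))/Δ
            - vD i 0 1 (X j) (tg k)
          = -(1/Δ) * (vD i 0 0 (X j) (tg (k-1)) - vD i 0 0 (X j) (tg k)
              - (tg (k-1) - tg k) * vD i 0 1 (X j) (tg k)) := by
        rw [hkm]; field_simp; ring
      rw [hid2, abs_mul]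
      have h1 : |(-(1/Δ))| = 1/Δ := by rw [abs_neg, abs_of_pos (by positivity)]
      rw [h1]
      have h2 : |tg (k-1) - tg k| = Δ := by
        rw [hkm, show tg k - Δ - tg k = -Δ by ring, abs_neg, abs_of_pos hΔpos]
      rw [h2] at htayt
      calc 1/Δ * |vD i 0 0 (X j) (tg (k-1)) - vD i 0 0 (X j) (tg k)
            - (tg (k-1) - tg k) * vD i 0 1 (X j) (tg k)|
          ≤ 1/Δ * (C0 * Δ^2) := mul_le_mul_of_nonneg_left htayt (by positivity)
        _ = C0 * Δ := by field_simp
    -- space Taylor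
    set K3 : ℝ := C0 * (ε i) ^ (-(((3:ℕ):ℝ) - 2) / 2) with hK3d
    have hK3nn : 0 ≤ K3 := by
      rw [hK3d]
      have h := (hεpos i).le
      positivity
    have hεK3 : ε i * K3 ≤ C0 := by
      rw [hK3d, show (-(((3:ℕ):ℝ) - 2) / 2) = (-(1/2) : ℝ) by norm_num]
      have h2 : ε i * ε i ^ (-(1/2):ℝ) = ε i ^ ((1:ℝ)/2) := by
        have h4 := Real.rpow_add (hεpos i) 1 (-(1/2))
        rw [Real.rpow_one] at h4
        rw [← h4]
        congr 1
        norm_num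
      have h3 : ε i ^ ((1:ℝ)/2) ≤ 1 :=
        Real.rpow_le_one (hεpos i).le (hεlt1 i).le (by norm_num)
      calc ε i * (C0 * ε i ^ (-(1/2):ℝ)) = C0 * (ε i * ε i ^ (-(1/2):ℝ)) := by ring
        _ = C0 * ε i ^ ((1:ℝ)/2) := by rw [h2]
        _ ≤ C0 * 1 := mul_le_mul_of_nonneg_left h3 hC0
        _ = C0 := mul_one C0
    have hb3 : ∀ y ∈ Set.Icc (0:ℝ) 1, |vD i 3 0 y (tg k)| ≤ K3 := by
      intro y hy
      rw [hK3d]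
      exact (hbnd i y hy (tg k) htk).2.2.1 3 le_rfl (by norm_num)
    have htayp := taylor2 (convex_Icc (0:ℝ) 1)
      (f := fun y => vD i 0 0 y (tg k)) (f' := fun y => vD i 1 0 y (tg k))
      (f'' := fun y => vD i 2 0 y (tg k)) (f''' := fun y => vD i 3 0 y (tg k)) (K := K3)
      (fun y hy => hDx i 0 0 (Or.inl ⟨by norm_num, rfl⟩) (tg k) htk y hy)
      (fun y hy => hDx i 1 0 (Or.inl ⟨by norm_num, rfl⟩) (tg k) htk y hy)
      (fun y hy => hDx i 2 0 (Or.inl ⟨by norm_num, rfl⟩) (tg k) htk y hy)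
      hb3 (c := X j) (x := X (j+1)) hXj hXp
    have htaym := taylor2 (convex_Icc (0:ℝ) 1)
      (f := fun y => vD i 0 0 y (tg k)) (f' := fun y => vD i 1 0 y (tg k))
      (f'' := fun y => vD i 2 0 y (tg k)) (f''' := fun y => vD i 3 0 y (tg k)) (K := K3)
      (fun y hy => hDx i 0 0 (Or.inl ⟨by norm_num, rfl⟩) (tg k) htk y hy)
      (fun y hy => hDx i 1 0 (Or.inl ⟨by norm_num, rfl⟩) (tg k) htk y hy)
      (fun y hy => hDx i 2 0 (Or.inl ⟨by norm_num, rfl⟩) (tg k) htk y hy)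
      hb3 (c := X j) (x := X (j-1)) hXj hXm
    have hAp : |vD i 0 0 (X (j+1)) (tg k) - vD i 0 0 (X j) (tg k)
          - (X (j+1) - X j) * vD i 1 0 (X j) (tg k)
          - (X (j+1) - X j)^2/2 * vD i 2 0 (X j) (tg k)|
        ≤ K3 * (X (j+1) - X j)^3 := by
      have h := htayp
      rwa [abs_of_pos hpp'] at h
    have hAm : |vD i 0 0 (X (j-1)) (tg k) - vD i 0 0 (X j) (tg k)
          - (X (j-1) - X j) * vD i 1 0 (X j) (tg k)
          - (X (j-1) - X j)^2/2 * vD i 2 0 (X j) (tg k)|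
        ≤ K3 * (X j - X (j-1))^3 := by
      have h := htaym
      rwa [show |X (j-1) - X j| = X j - X (j-1) by
        rw [abs_of_neg (by linarith : X (j-1) - X j < 0)]; ring] at h
    have hδ : 2/(X (j+1) - X (j-1)) *
          ((vD i 0 0 (X (j+1)) (tg k) - vD i 0 0 (X j) (tg k))/(X (j+1) - X j)
            - (vD i 0 0 (X j) (tg k) - vD i 0 0 (X (j-1)) (tg k))/(X j - X (j-1)))
          - vD i 2 0 (X j) (tg k)
        = 2/(X (j+1) - X (j-1)) *
            ((vD i 0 0 (X (j+1)) (tg k) - vD i 0 0 (X j) (tg k)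
               - (X (j+1) - X j) * vD i 1 0 (X j) (tg k)
               - (X (j+1) - X j)^2/2 * vD i 2 0 (X j) (tg k))/(X (j+1) - X j)
             + (vD i 0 0 (X (j-1)) (tg k) - vD i 0 0 (X j) (tg k)
               - (X (j-1) - X j) * vD i 1 0 (X j) (tg k)
               - (X (j-1) - X j)^2/2 * vD i 2 0 (X j) (tg k))/(X j - X (j-1))) := by
      rw [hsum]
      field_simp
      ring
    have hδb : |2/(X (j+1) - X (j-1)) *
          ((vD i 0 0 (X (j+1)) (tg k) - vD i 0 0 (X j) (tg k))/(X (j+1) - X j)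
            - (vD i 0 0 (X j) (tg k) - vD i 0 0 (X (j-1)) (tg k))/(X j - X (j-1)))
          - vD i 2 0 (X j) (tg k)| ≤ K3 * (1/(q:ℝ)) := by
      rw [hδ]
      have e1 : |(vD i 0 0 (X (j+1)) (tg k) - vD i 0 0 (X j) (tg k)
            - (X (j+1) - X j) * vD i 1 0 (X j) (tg k)
            - (X (j+1) - X j)^2/2 * vD i 2 0 (X j) (tg k))/(X (j+1) - X j)|
          ≤ K3 * (X (j+1) - X j)^2 := by
        rw [abs_div, abs_of_pos hpp', div_le_iff₀ hpp']
        calc |vD i 0 0 (X (j+1)) (tg k) - vD i 0 0 (X j) (tg k)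
              - (X (j+1) - X j) * vD i 1 0 (X j) (tg k)
              - (X (j+1) - X j)^2/2 * vD i 2 0 (X j) (tg k)|
            ≤ K3 * (X (j+1) - X j)^3 := hAp
          _ = K3 * (X (j+1) - X j)^2 * (X (j+1) - X j) := by ring
      have e2 : |(vD i 0 0 (X (j-1)) (tg k) - vD i 0 0 (X j) (tg k)
            - (X (j-1) - X j) * vD i 1 0 (X j) (tg k)
            - (X (j-1) - X j)^2/2 * vD i 2 0 (X j) (tg k))/(X j - X (j-1))|
          ≤ K3 * (X j - X (j-1))^2 := by
        rw [abs_div, abs_of_pos hpp, div_le_iff₀ hpp]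
        calc |vD i 0 0 (X (j-1)) (tg k) - vD i 0 0 (X j) (tg k)
              - (X (j-1) - X j) * vD i 1 0 (X j) (tg k)
              - (X (j-1) - X j)^2/2 * vD i 2 0 (X j) (tg k)|
            ≤ K3 * (X j - X (j-1))^3 := hAm
          _ = K3 * (X j - X (j-1))^2 * (X j - X (j-1)) := by ring
      have hA : |(vD i 0 0 (X (j+1)) (tg k) - vD i 0 0 (X j) (tg k)
            - (X (j+1) - X j) * vD i 1 0 (X j) (tg k)
            - (X (j+1) - X j)^2/2 * vD i 2 0 (X j) (tg k))/(X (j+1) - X j)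
          + (vD i 0 0 (X (j-1)) (tg k) - vD i 0 0 (X j) (tg k)
            - (X (j-1) - X j) * vD i 1 0 (X j) (tg k)
            - (X (j-1) - X j)^2/2 * vD i 2 0 (X j) (tg k))/(X j - X (j-1))|
          ≤ K3 * (X (j+1) - X j)^2 + K3 * (X j - X (j-1))^2 :=
        (abs_add_le _ _).trans (by linarith)
      rw [abs_mul, abs_of_nonneg (by positivity : (0:ℝ) ≤ 2/(X (j+1) - X (j-1)))]
      calc 2/(X (j+1) - X (j-1)) * |(vD i 0 0 (X (j+1)) (tg k) - vD i 0 0 (X j) (tg k)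
            - (X (j+1) - X j) * vD i 1 0 (X j) (tg k)
            - (X (j+1) - X j)^2/2 * vD i 2 0 (X j) (tg k))/(X (j+1) - X j)
          + (vD i 0 0 (X (j-1)) (tg k) - vD i 0 0 (X j) (tg k)
            - (X (j-1) - X j) * vD i 1 0 (X j) (tg k)
            - (X (j-1) - X j)^2/2 * vD i 2 0 (X j) (tg k))/(X j - X (j-1))|
          ≤ 2/(X (j+1) - X (j-1)) *
            (K3 * (X (j+1) - X j)^2 + K3 * (X j - X (j-1))^2) :=
          mul_le_mul_of_nonneg_left hA (by positivity)
        _ ≤ K3 * (1/(q:ℝ)) := by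
            rw [hsum, show K3 * (1/(q:ℝ)) = K3/(q:ℝ) by ring, div_mul_eq_mul_div,
              div_le_div_iff₀ (by linarith) hqR]
            have h1 : (X (j+1) - X j)*(q:ℝ) ≤ 1/4 := by
              calc (X (j+1) - X j)*(q:ℝ) ≤ (1/(4*(q:ℝ)))*(q:ℝ) :=
                  mul_le_mul_of_nonneg_right hple' hqR.le
                _ = 1/4 := by field_simp
            have h2 : (X j - X (j-1))*(q:ℝ) ≤ 1/4 := by
              calc (X j - X (j-1))*(q:ℝ) ≤ (1/(4*(q:ℝ)))*(q:ℝ) :=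
                  mul_le_mul_of_nonneg_right hple hqR.le
                _ = 1/4 := by field_simp
            have g1 : K3 * ((X (j+1) - X j) * ((X (j+1) - X j) * (q:ℝ))) ≤
                K3 * ((X (j+1) - X j) * (1/4)) :=
              mul_le_mul_of_nonneg_left (mul_le_mul_of_nonneg_left h1 hpp'.le) hK3nn
            have g2 : K3 * ((X j - X (j-1)) * ((X j - X (j-1)) * (q:ℝ))) ≤
                K3 * ((X j - X (j-1)) * (1/4)) :=
              mul_le_mul_of_nonneg_left (mul_le_mul_of_nonneg_left h2 hpp.le) hK3nn
            have g3 : 0 ≤ K3 * (X (j+1) - X j) := mul_nonneg hK3nn hpp'.le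
            have g4 : 0 ≤ K3 * (X j - X (j-1)) := mul_nonneg hK3nn hpp.le
            linarith [g1, g2, g3, g4]
    -- the residual bound
    have hRbound : |((vD i 0 0 (X j) (tg k) - vD i 0 0 (X j) (tg (k-1)))/Δ
          - vD i 0 1 (X j) (tg k))
        - ε i * (2/(X (j+1) - X (j-1)) *
            ((vD i 0 0 (X (j+1)) (tg k) - vD i 0 0 (X j) (tg k))/(X (j+1) - X j)
              - (vD i 0 0 (X j) (tg k) - vD i 0 0 (X (j-1)) (tg k))/(X j - X (j-1)))
            - vD i 2 0 (X j) (tg k))| ≤ C0 * Δ + C0 * (1/(q:ℝ)) := by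
      have h1 : |ε i * (2/(X (j+1) - X (j-1)) *
            ((vD i 0 0 (X (j+1)) (tg k) - vD i 0 0 (X j) (tg k))/(X (j+1) - X j)
              - (vD i 0 0 (X j) (tg k) - vD i 0 0 (X (j-1)) (tg k))/(X j - X (j-1)))
            - vD i 2 0 (X j) (tg k))| ≤ C0 * (1/(q:ℝ)) := by
        rw [abs_mul, abs_of_pos (hεpos i)]
        calc ε i * |2/(X (j+1) - X (j-1)) *
              ((vD i 0 0 (X (j+1)) (tg k) - vD i 0 0 (X j) (tg k))/(X (j+1) - X j)
                - (vD i 0 0 (X j) (tg k) - vD i 0 0 (X (j-1)) (tg k))/(X j - X (j-1)))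
              - vD i 2 0 (X j) (tg k)|
            ≤ ε i * (K3 * (1/(q:ℝ))) := mul_le_mul_of_nonneg_left hδb (hεpos i).le
          _ = (ε i * K3) * (1/(q:ℝ)) := by ring
          _ ≤ C0 * (1/(q:ℝ)) := mul_le_mul_of_nonneg_right hεK3 (by positivity)
      have htri := abs_sub ((vD i 0 0 (X j) (tg k) - vD i 0 0 (X j) (tg (k-1)))/Δ
          - vD i 0 1 (X j) (tg k))
        (ε i * (2/(X (j+1) - X (j-1)) *
            ((vD i 0 0 (X (j+1)) (tg k) - vD i 0 0 (X j) (tg k))/(X (j+1) - X j)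
              - (vD i 0 0 (X j) (tg k) - vD i 0 0 (X (j-1)) (tg k))/(X j - X (j-1)))
            - vD i 2 0 (X j) (tg k)))
      linarith [hRt]
    -- error equation
    have hee : (e i j k - e i j (k-1))/Δ
        - ε i * (2/(X (j+1) - X (j-1)) * ((e i (j+1) k - e i j k)/(X (j+1) - X j)
            - (e i j k - e i (j-1) k)/(X j - X (j-1))))
        + (a i 0 (X j) (tg k) * e 0 j k + a i 1 (X j) (tg k) * e 1 j k)
        = -(((vD i 0 0 (X j) (tg k) - vD i 0 0 (X j) (tg (k-1)))/Δ
              - vD i 0 1 (X j) (tg k))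
            - ε i * (2/(X (j+1) - X (j-1)) *
                ((vD i 0 0 (X (j+1)) (tg k) - vD i 0 0 (X j) (tg k))/(X (j+1) - X j)
                  - (vD i 0 0 (X j) (tg k) - vD i 0 0 (X (j-1)) (tg k))/(X j - X (j-1)))
                - vD i 2 0 (X j) (tg k))) := by
      simp only [he]
      linear_combination hEq - hPDEeq
    have hmul : (s*e i j k - s*e i j (k-1))/Δ
        - ε i * (2/(X (j+1) - X (j-1)) * ((s*e i (j+1) k - s*e i j k)/(X (j+1) - X j)
            - (s*e i j k - s*e i (j-1) k)/(X j - X (j-1))))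
        + (a i 0 (X j) (tg k) * (s*e 0 j k) + a i 1 (X j) (tg k) * (s*e 1 j k))
        = s * (-(((vD i 0 0 (X j) (tg k) - vD i 0 0 (X j) (tg (k-1)))/Δ
              - vD i 0 1 (X j) (tg k))
            - ε i * (2/(X (j+1) - X (j-1)) *
                ((vD i 0 0 (X (j+1)) (tg k) - vD i 0 0 (X j) (tg k))/(X (j+1) - X j)
                  - (vD i 0 0 (X j) (tg k) - vD i 0 0 (X (j-1)) (tg k))/(X j - X (j-1)))
                - vD i 2 0 (X j) (tg k)))) := by
      linear_combination s * hee
    have hd1 : (E k - E (k-1))/Δ ≤ (s*e i j k - s*e i j (k-1))/Δ := by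
      have hnum : E k - E (k-1) ≤ s*e i j k - s*e i j (k-1) := by
        have h := hsle (k-1) i j hj8
        linarith [hsEk]
      exact (div_le_div_iff_of_pos_right hΔpos).2 hnum
    have hd2 : ε i * (2/(X (j+1) - X (j-1)) * ((s*e i (j+1) k - s*e i j k)/(X (j+1) - X j)
            - (s*e i j k - s*e i (j-1) k)/(X j - X (j-1)))) ≤ 0 := by
      have hA : (s*e i (j+1) k - s*e i j k)/(X (j+1) - X j) ≤ 0 :=
        div_nonpos_of_nonpos_of_nonneg
          (by linarith [hsle k i (j+1) (by omega), hsEk]) hpp'.le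
      have hB : 0 ≤ (s*e i j k - s*e i (j-1) k)/(X j - X (j-1)) :=
        div_nonneg (by linarith [hsle k i (j-1) (by omega), hsEk]) hpp.le
      have h2q : (0:ℝ) ≤ 2/(X (j+1) - X (j-1)) := by positivity
      have hAB : (s*e i (j+1) k - s*e i j k)/(X (j+1) - X j)
          - (s*e i j k - s*e i (j-1) k)/(X j - X (j-1)) ≤ 0 := by linarith
      have h5 : 2/(X (j+1) - X (j-1)) * ((s*e i (j+1) k - s*e i j k)/(X (j+1) - X j)
          - (s*e i j k - s*e i (j-1) k)/(X j - X (j-1))) ≤ 0 :=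
        mul_nonpos_iff.mpr (Or.inl ⟨h2q, hAB⟩)
      exact mul_nonpos_iff.mpr (Or.inl ⟨(hεpos i).le, h5⟩)
    have hd3 : α * E k ≤ a i 0 (X j) (tg k) * (s*e 0 j k)
        + a i 1 (X j) (tg k) * (s*e 1 j k) := by
      have hrow' := hrow i (X j) hXj (tg k) htk
      simp only [Fin.sum_univ_two] at hrow'
      have hse0 : s * e 0 j k ≤ E k := hsle k 0 j hj8
      have hse1 : s * e 1 j k ≤ E k := hsle k 1 j hj8
      have hEkn := hEnn k
      have hi : i = 0 ∨ i = 1 := by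
        fin_cases i
        · exact Or.inl rfl
        · exact Or.inr rfl
      rcases hi with rfl | rfl
      · have hoff01 := hoff 0 1 (by decide) (X j) hXj (tg k) htk
        have t1 : a 0 1 (X j) (tg k) * E k ≤ a 0 1 (X j) (tg k) * (s * e 1 j k) :=
          mul_le_mul_of_nonpos_left hse1 hoff01
        have t2 : α * E k ≤ (a 0 0 (X j) (tg k) + a 0 1 (X j) (tg k)) * E k :=
          mul_le_mul_of_nonneg_right hrow'.le hEkn
        have t3 : a 0 0 (X j) (tg k) * (s * e 0 j k) = a 0 0 (X j) (tg k) * E k := by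
          rw [hsEk]
        linarith [t1, t2, t3]
      · have hoff10 := hoff 1 0 (by decide) (X j) hXj (tg k) htk
        have t1 : a 1 0 (X j) (tg k) * E k ≤ a 1 0 (X j) (tg k) * (s * e 0 j k) :=
          mul_le_mul_of_nonpos_left hse0 hoff10
        have t2 : α * E k ≤ (a 1 0 (X j) (tg k) + a 1 1 (X j) (tg k)) * E k :=
          mul_le_mul_of_nonneg_right hrow'.le hEkn
        have t3 : a 1 1 (X j) (tg k) * (s * e 1 j k) = a 1 1 (X j) (tg k) * E k := by
          rw [hsEk]
        linarith [t1, t2, t3]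
    have hd4 : s * (-(((vD i 0 0 (X j) (tg k) - vD i 0 0 (X j) (tg (k-1)))/Δ
              - vD i 0 1 (X j) (tg k))
            - ε i * (2/(X (j+1) - X (j-1)) *
                ((vD i 0 0 (X (j+1)) (tg k) - vD i 0 0 (X j) (tg k))/(X (j+1) - X j)
                  - (vD i 0 0 (X j) (tg k) - vD i 0 0 (X (j-1)) (tg k))/(X j - X (j-1)))
                - vD i 2 0 (X j) (tg k)))) ≤ C0 * Δ + C0 * (1/(q:ℝ)) := by
      refine le_trans (hs_abs _) ?_
      rw [abs_neg]
      exact hRbound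
    have hfinal : (E k - E (k-1))/Δ + α * E k ≤ α * (C * S) := by
      linarith [hmul, hd1, hd2, hd3, hd4, hτBd]
    by_cases hEE : E k ≤ E (k-1)
    · exact le_max_of_le_left hEE
    · have h5 : 0 < (E k - E (k-1))/Δ := div_pos (by linarith) hΔpos
      have h6 : α * E k ≤ α * (C * S) := by linarith
      exact le_max_of_le_right (le_of_mul_le_mul_left h6 hα0)
  -- induction over time levels
  have hEBd : ∀ k', k' ≤ M → E k' ≤ C * S := by
    intro k'
    induction k' with
    | zero =>
      intro _
      simp only [hEdef]
      apply Finset.sup'_le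
      intro p hp
      have hp2 : p.2 ≤ 8*q := by
        simp only [Finset.mem_product, Finset.mem_range] at hp; omega
      have hz : e p.1 p.2 0 = 0 := by
        simp only [he]
        rw [hinit p.1 p.2 hp2, htg 0]
        norm_num
      rw [hz, abs_zero]
      exact hCSpos.le
    | succ n ih =>
      intro hn
      have h1 := hlev (n+1) (by omega) hn
      rw [Nat.add_sub_cancel] at h1
      exact le_trans h1 (max_le (ih (by omega)) le_rfl)
  -- conclusion
  intro i j hj k hk
  have h1 : |e i j k| ≤ E k := hEub k i j hj
  have h2 := hEBd k hk
  have h3 : V i j k - vD i 0 0 (X j) (tg k) = e i j k := by simp only [he]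
  rw [h3]
  exact le_trans h1 h2
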